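/- (Filters lie in the RKHS of the inverse polynomial kernel.) Let σ: ℝ → ℝ be given by a power series σ(t) = ∑_{j=0}^∞ a_j t^j, and define C_σ(λ) = √(∑_{j=0}^∞ 2^{j+1} a_j² λ^{2j}). Let w ∈ ℝ^{d} satisfy C_σ(‖w‖₂) < ∞ (which in particular implies the power series for σ converges absolutely on [−‖w‖₂, ‖w‖₂]). Then there exists a square-summable family w◇ ∈ ℓ²(T), indexed by the set T of finite tuples from {1,…,d}, such that ‖w◇‖_{ℓ²} = C_σ(‖w‖₂) and, for every z ∈ ℝ^d with ‖z‖₂ ≤ 1, the family (w◇_τ φ(z)_τ)_{τ∈T} is absolutely summable with ∑_{τ∈T} w◇_τ φ(z)_τ = σ(⟨w, z⟩). -/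

import Mathlib

open scoped RealInnerProductSpace

/-- The index set `T = ⋃_{j ≥ 0} [d]^j` of all finite tuples of indices from `{1,…,d}`. -/
abbrev Tup (d : ℕ) : Type := Σ j : ℕ, Fin j → Fin d

/-- The feature map of the inverse polynomial kernel:
`φ(z)_{(k₁,…,k_j)} = 2^{-(j+1)/2} z_{k₁} ⋯ z_{k_j}`. -/
noncomputable def phi (d : ℕ) (z : EuclideanSpace ℝ (Fin d)) (τ : Tup d) : ℝ :=
  (Real.sqrt 2)⁻¹ ^ (τ.1 + 1) * ∏ i : Fin τ.1, z (τ.2 i)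

/-- `C_σ(λ) = √(∑_{j=0}^∞ 2^{j+1} a_j² λ^{2j})`, the quantity associated to the
inverse polynomial kernel for an activation with power-series coefficients `a`. -/
noncomputable def Csigma (a : ℕ → ℝ) (lam : ℝ) : ℝ :=
  Real.sqrt (∑' j : ℕ, (2 : ℝ) ^ (j + 1) * (a j) ^ 2 * lam ^ (2 * j))

lemma fiber_sum {d : ℕ} (j : ℕ) (g : Fin d → ℝ) :
    ∑ k : Fin j → Fin d, ∏ i, g (k i) = (∑ x, g x) ^ j := by
  rw [Finset.sum_pow' Finset.univ g j, Fintype.piFinset_univ]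

set_option maxHeartbeats 1000000 in
/-- filters lie in the RKHS of the inverse polynomial kernel.
If `σ(t) = ∑_j a_j t^j` (convergent on `[-‖w‖, ‖w‖]`) and `C_σ(‖w‖₂) < ∞`
(i.e. the defining series is summable), then there is `w◇ ∈ ℓ²(T)` with
`‖w◇‖_{ℓ²} = C_σ(‖w‖₂)` such that for every `z` in the closed unit ball,
`(w◇_τ φ(z)_τ)_τ` is absolutely summable with sum `σ(⟪w, z⟫)`. -/
theorem filter_in_RKHS_inverse_polynomial_kernel
    (d : ℕ) (hd : 1 ≤ d)
    (a : ℕ → ℝ) (σ : ℝ → ℝ)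
    (w : EuclideanSpace ℝ (Fin d))
    (hσ : ∀ t : ℝ, |t| ≤ ‖w‖ → HasSum (fun j : ℕ => a j * t ^ j) (σ t))
    (hC : Summable fun j : ℕ => (2 : ℝ) ^ (j + 1) * (a j) ^ 2 * ‖w‖ ^ (2 * j)) :
    ∃ wd : Tup d → ℝ,
      (Summable fun τ : Tup d => (wd τ) ^ 2) ∧
      Real.sqrt (∑' τ : Tup d, (wd τ) ^ 2) = Csigma a ‖w‖ ∧
      ∀ z : EuclideanSpace ℝ (Fin d), ‖z‖ ≤ 1 →
        (Summable fun τ : Tup d => |wd τ * phi d z τ|) ∧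
        HasSum (fun τ : Tup d => wd τ * phi d z τ) (σ ⟪w, z⟫) := by
  classical
  set s2 : ℝ := Real.sqrt 2 with hs2
  have hs2pos : 0 < s2 := Real.sqrt_pos.mpr (by norm_num)
  have hs2sq : s2 ^ 2 = 2 := Real.sq_sqrt (by norm_num)
  set wd : Tup d → ℝ := fun τ => a τ.1 * s2 ^ (τ.1 + 1) * ∏ i, w (τ.2 i) with hwd
  -- square of wd
  have hsq : ∀ τ : Tup d, wd τ ^ 2
      = (2 : ℝ) ^ (τ.1 + 1) * a τ.1 ^ 2 * ∏ i, (w (τ.2 i)) ^ 2 := by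
    intro τ
    rw [hwd]
    simp only
    rw [mul_pow, mul_pow, ← pow_mul, mul_comm (τ.1 + 1) 2, pow_mul, hs2sq,
      Finset.prod_pow]
    ring
  -- fiber sums of squares
  have hfibsq : ∀ j : ℕ, ∑ k : Fin j → Fin d, wd ⟨j, k⟩ ^ 2
      = (2 : ℝ) ^ (j + 1) * a j ^ 2 * ‖w‖ ^ (2 * j) := by
    intro j
    have hw2 : ∑ x, (w x) ^ 2 = ‖w‖ ^ 2 := by
      rw [← real_inner_self_eq_norm_sq]
      simp only [PiLp.inner_apply, RCLike.inner_apply, conj_trivial, sq]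
    calc ∑ k : Fin j → Fin d, wd ⟨j, k⟩ ^ 2
        = ∑ k : Fin j → Fin d, (2 : ℝ) ^ (j + 1) * a j ^ 2 * ∏ i, (w (k i)) ^ 2 := by
          exact Finset.sum_congr rfl fun k _ => hsq ⟨j, k⟩
      _ = (2 : ℝ) ^ (j + 1) * a j ^ 2 * ∑ k : Fin j → Fin d, ∏ i, (w (k i)) ^ 2 := by
          rw [Finset.mul_sum]
      _ = (2 : ℝ) ^ (j + 1) * a j ^ 2 * (‖w‖ ^ 2) ^ j := by
          rw [fiber_sum j (fun x => (w x) ^ 2), hw2]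
      _ = (2 : ℝ) ^ (j + 1) * a j ^ 2 * ‖w‖ ^ (2 * j) := by rw [← pow_mul]
  have hfib_summ : ∀ j : ℕ, Summable fun k : Fin j → Fin d => wd ⟨j, k⟩ ^ 2 :=
    fun j => (hasSum_fintype _).summable
  -- summability of squares
  have hsummsq : Summable fun τ : Tup d => wd τ ^ 2 := by
    refine (summable_sigma_of_nonneg fun τ => sq_nonneg _).mpr ⟨hfib_summ, ?_⟩
    refine hC.congr fun j => ?_
    rw [tsum_fintype, hfibsq j]
  refine ⟨wd, hsummsq, ?_, ?_⟩
  · -- norm equality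
    rw [Csigma]
    congr 1
    rw [Summable.tsum_sigma' hfib_summ hsummsq]
    refine tsum_congr fun j => ?_
    rw [tsum_fintype, hfibsq j]
  · intro z hz
    set t : ℝ := ⟪w, z⟫ with ht
    have hinner : t = ∑ x, w x * z x := by
      simp [ht, PiLp.inner_apply, RCLike.inner_apply, mul_comm]
    have htle : |t| ≤ ‖w‖ := by
      calc |t| ≤ ‖w‖ * ‖z‖ := abs_real_inner_le_norm w z
        _ ≤ ‖w‖ * 1 := by gcongr
        _ = ‖w‖ := mul_one _
    -- the product formula
    have hprod : ∀ τ : Tup d, wd τ * phi d z τ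
        = a τ.1 * ∏ i, (w (τ.2 i) * z (τ.2 i)) := by
      intro τ
      have h1 : s2 ^ (τ.1 + 1) * s2⁻¹ ^ (τ.1 + 1) = 1 := by
        rw [← mul_pow, mul_inv_cancel₀ (ne_of_gt hs2pos), one_pow]
      calc wd τ * phi d z τ
          = a τ.1 * (s2 ^ (τ.1 + 1) * s2⁻¹ ^ (τ.1 + 1))
            * ((∏ i, w (τ.2 i)) * ∏ i, z (τ.2 i)) := by
            rw [hwd, phi]; ring
        _ = a τ.1 * ∏ i, (w (τ.2 i) * z (τ.2 i)) := by
            rw [h1, ← Finset.prod_mul_distrib]; ring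
    -- abs fiber sums
    set s : ℝ := ∑ x, |w x * z x| with hs
    have hs0 : 0 ≤ s := Finset.sum_nonneg fun _ _ => abs_nonneg _
    have hsle : s ≤ ‖w‖ := by
      set w' : EuclideanSpace ℝ (Fin d) := WithLp.toLp 2 (fun x => |w x|) with hw'
      set z' : EuclideanSpace ℝ (Fin d) := WithLp.toLp 2 (fun x => |z x|) with hz'
      have hnw : ‖w'‖ = ‖w‖ := by
        rw [EuclideanSpace.norm_eq, EuclideanSpace.norm_eq]
        simp [hw']
      have hnz : ‖z'‖ = ‖z‖ := by
        rw [EuclideanSpace.norm_eq, EuclideanSpace.norm_eq]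
        simp [hz']
      have hiz : ⟪w', z'⟫ = s := by
        simp [hw', hz', hs, PiLp.inner_apply, RCLike.inner_apply, abs_mul, mul_comm]
      calc s = ⟪w', z'⟫ := hiz.symm
        _ ≤ ‖w'‖ * ‖z'‖ := real_inner_le_norm w' z'
        _ ≤ ‖w‖ * 1 := by rw [hnw, hnz]; gcongr
        _ = ‖w‖ := mul_one _
    have habs_fib : ∀ j : ℕ, ∑ k : Fin j → Fin d, |wd ⟨j, k⟩ * phi d z ⟨j, k⟩|
        = |a j| * s ^ j := by
      intro j
      calc ∑ k : Fin j → Fin d, |wd ⟨j, k⟩ * phi d z ⟨j, k⟩|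
          = ∑ k : Fin j → Fin d, |a j| * ∏ i, |w (k i) * z (k i)| := by
            refine Finset.sum_congr rfl fun k _ => ?_
            rw [hprod ⟨j, k⟩, abs_mul, Finset.abs_prod]
        _ = |a j| * ∑ k : Fin j → Fin d, ∏ i, |w (k i) * z (k i)| := by
            rw [Finset.mul_sum]
        _ = |a j| * s ^ j := by rw [fiber_sum j (fun x => |w x * z x|), hs]
    -- summability of |a j| * ‖w‖ ^ j
    have hmaj : Summable fun j : ℕ => |a j| * ‖w‖ ^ j := by
      have hgeo : Summable fun j : ℕ => ((1 : ℝ) / 2) ^ (j + 1) := by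
        have := (summable_geometric_of_lt_one (by norm_num : (0:ℝ) ≤ 1/2)
          (by norm_num)).mul_left ((1 : ℝ) / 2)
        refine this.congr fun j => ?_
        rw [pow_succ]; ring
      refine Summable.of_nonneg_of_le (fun j => by positivity) (fun j => ?_) (hC.add hgeo)
      set u : ℝ := |a j| * ‖w‖ ^ j with hu
      have hu0 : 0 ≤ u := by positivity
      have husq : u ^ 2 = a j ^ 2 * ‖w‖ ^ (2 * j) := by
        rw [hu, mul_pow, sq_abs, ← pow_mul, mul_comm j 2]
      have hP : (0 : ℝ) < 2 ^ (j + 1) := by positivity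
      have hPB : ((1 : ℝ) / 2) ^ (j + 1) * 2 ^ (j + 1) = 1 := by
        rw [← mul_pow]; norm_num
      have key : u ≤ (2 : ℝ) ^ (j + 1) * u ^ 2 + ((1 : ℝ) / 2) ^ (j + 1) := by
        nlinarith [sq_nonneg ((2 : ℝ) ^ (j + 1) * u - 1), hP, hu0,
          mul_nonneg hu0 hP.le]
      calc u ≤ (2 : ℝ) ^ (j + 1) * u ^ 2 + ((1 : ℝ) / 2) ^ (j + 1) := key
        _ = (2 : ℝ) ^ (j + 1) * a j ^ 2 * ‖w‖ ^ (2 * j) + ((1 : ℝ) / 2) ^ (j + 1) := by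
            rw [husq]; ring
    have hmaj' : Summable fun j : ℕ => |a j| * s ^ j := by
      refine Summable.of_nonneg_of_le (fun j => by positivity) (fun j => ?_) hmaj
      exact mul_le_mul_of_nonneg_left (pow_le_pow_left₀ hs0 hsle j) (abs_nonneg _)
    -- absolute summability over Tup d
    have habs : Summable fun τ : Tup d => |wd τ * phi d z τ| := by
      refine (summable_sigma_of_nonneg fun τ => abs_nonneg _).mpr
        ⟨fun j => (hasSum_fintype _).summable, ?_⟩
      refine hmaj'.congr fun j => ?_
      rw [tsum_fintype, habs_fib j]
    refine ⟨habs, ?_⟩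
    have hsumm : Summable fun τ : Tup d => wd τ * phi d z τ :=
      summable_abs_iff.mp habs
    have hfib : ∀ j : ℕ, ∑ k : Fin j → Fin d, wd ⟨j, k⟩ * phi d z ⟨j, k⟩
        = a j * t ^ j := by
      intro j
      calc ∑ k : Fin j → Fin d, wd ⟨j, k⟩ * phi d z ⟨j, k⟩
          = ∑ k : Fin j → Fin d, a j * ∏ i, (w (k i) * z (k i)) := by
            exact Finset.sum_congr rfl fun k _ => hprod ⟨j, k⟩
        _ = a j * ∑ k : Fin j → Fin d, ∏ i, (w (k i) * z (k i)) := by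
            rw [Finset.mul_sum]
        _ = a j * t ^ j := by
            rw [fiber_sum j (fun x => w x * z x), ← hinner]
    have hval : (∑' τ : Tup d, wd τ * phi d z τ) = σ t := by
      rw [Summable.tsum_sigma' (fun j => (hasSum_fintype _).summable) hsumm]
      rw [← (hσ t htle).tsum_eq]
      refine tsum_congr fun j => ?_
      rw [tsum_fintype, hfib j]
    have := hsumm.hasSum
    rwa [hval] at this
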